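/- For any integers t, e with 2 ≤ t ≤ e − 1, there exists an almost symmetric numerical semigroup S with maximal reduced type such that t(S) = t and e(S) = e. (Explicitly, S = Δ(e+1) \ {2(e+1) − t} works.) -/

import Mathlib

/-- A numerical semigroup: a subset of ℕ containing 0, closed under addition,
with finite complement. -/
noncomputable def IsNumericalSemigroup (S : Set ℕ) : Prop :=
  0 ∈ S ∧ (∀ a ∈ S, ∀ b ∈ S, a + b ∈ S) ∧ Sᶜ.Finite

/-- The half-line Δ(m) = {0} ∪ {x : m ≤ x}. -/
noncomputable def Delta (m : ℕ) : Set ℕ := {0} ∪ {x | m ≤ x}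

/-- Multiplicity: least nonzero element. -/
noncomputable def mult (S : Set ℕ) : ℕ := sInf {s ∈ S | s ≠ 0}

/-- Frobenius number: largest gap. -/
noncomputable def frob (S : Set ℕ) : ℕ := sSup Sᶜ

/-- Genus: number of gaps. -/
noncomputable def genus (S : Set ℕ) : ℕ := Sᶜ.ncard

/-- The image of S in ℤ. -/
noncomputable def ZS (S : Set ℕ) : Set ℤ := (fun n : ℕ => (n : ℤ)) '' S

/-- Pseudo-Frobenius numbers (as integers). -/
noncomputable def PF (S : Set ℕ) : Set ℤ :=
  {x | x ∉ ZS S ∧ ∀ s ∈ S, s ≠ 0 → x + (s : ℤ) ∈ ZS S}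

/-- Reduced pseudo-Frobenius set. -/
noncomputable def rPF (S : Set ℕ) : Set ℤ :=
  {x | x ∉ ZS S ∧ (frob S : ℤ) - (mult S : ℤ) + 1 ≤ x ∧ x ≤ (frob S : ℤ)}

/-- Type t(S). -/
noncomputable def typ (S : Set ℕ) : ℕ := (PF S).ncard

/-- Reduced type s(S). -/
noncomputable def redtyp (S : Set ℕ) : ℕ := (rPF S).ncard

/-- Apéry set of n in S. -/
noncomputable def Ap (S : Set ℕ) (n : ℕ) : Set ℕ := {s ∈ S | ∀ u : ℕ, s = u + n → u ∉ S}

/-- Minimal system of generators. -/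
noncomputable def msg (S : Set ℕ) : Set ℕ :=
  (S \ {0}) \ {x | ∃ a ∈ S \ {0}, ∃ b ∈ S \ {0}, x = a + b}

/-- Embedding dimension. -/
noncomputable def embdim (S : Set ℕ) : ℕ := (msg S).ncard

/-- Second smallest minimal generator. -/
noncomputable def secondGen (S : Set ℕ) : ℕ := sInf (msg S \ {mult S})

namespace Aux

def T (a t : ℕ) : Set ℕ := {0} ∪ {x | a + t ≤ x ∧ x ≠ 2*a + t}

lemma memT {a t x : ℕ} : x ∈ T a t ↔ x = 0 ∨ (a + t ≤ x ∧ x ≠ 2*a + t) := by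
  simp [T]

lemma complT (a t : ℕ) (ha : 2 ≤ a) (ht : 2 ≤ t) :
    (T a t)ᶜ = Set.Ico 1 (a+t) ∪ {2*a+t} := by
  ext x
  simp only [Set.mem_compl_iff, memT, Set.mem_union, Set.mem_Ico, Set.mem_singleton_iff]
  omega

lemma mem_ZS {S : Set ℕ} {n : ℕ} : (n : ℤ) ∈ ZS S ↔ n ∈ S := by
  simp [ZS]

lemma ZS_nonneg {S : Set ℕ} {z : ℤ} (h : z ∈ ZS S) : 0 ≤ z := by
  obtain ⟨n, _, rfl⟩ := h; positivity

lemma nsgT (a t : ℕ) (ha : 2 ≤ a) (ht : 2 ≤ t) : IsNumericalSemigroup (T a t) := by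
  refine ⟨Or.inl rfl, ?_, ?_⟩
  · intro x hx y hy
    rw [memT] at hx hy ⊢
    omega
  · rw [complT a t ha ht]
    exact (Set.finite_Ico _ _).union (Set.finite_singleton _)

lemma genusT (a t : ℕ) (ha : 2 ≤ a) (ht : 2 ≤ t) : genus (T a t) = a + t := by
  rw [genus, complT a t ha ht,
    Set.ncard_union_eq (by simp [Set.disjoint_singleton_right, Set.mem_Ico]; omega)
      (Set.finite_Ico _ _) (Set.finite_singleton _), Set.ncard_singleton]
  have h : (Set.Ico 1 (a+t)).ncard = a + t - 1 := by
    rw [← Finset.coe_Ico, Set.ncard_coe_finset, Nat.card_Ico]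
  omega

lemma frobT (a t : ℕ) (ha : 2 ≤ a) (ht : 2 ≤ t) : frob (T a t) = 2*a+t := by
  rw [frob]
  apply IsGreatest.csSup_eq
  constructor
  · rw [complT a t ha ht]; right; rfl
  · intro y hy
    rw [complT a t ha ht] at hy
    rcases hy with h | h
    · rw [Set.mem_Ico] at h; omega
    · rw [Set.mem_singleton_iff] at h; omega

lemma multT (a t : ℕ) (ha : 2 ≤ a) (ht : 2 ≤ t) : mult (T a t) = a + t := by
  rw [mult]
  apply le_antisymm
  · exact csInf_le (OrderBot.bddBelow _)
      ⟨memT.mpr (Or.inr ⟨le_refl _, by omega⟩), by omega⟩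
  · refine le_csInf ⟨a+t, ⟨memT.mpr (Or.inr ⟨le_refl _, by omega⟩), by omega⟩⟩ ?_
    rintro b ⟨hb, hb0⟩
    rw [memT] at hb; omega

lemma PFT (a t : ℕ) (ha : 2 ≤ a) (ht : 2 ≤ t) :
    PF (T a t) = ((Nat.cast : ℕ → ℤ) '' Set.Ioo a (a+t)) ∪ {((2*a+t : ℕ) : ℤ)} := by
  ext z
  constructor
  · rintro ⟨hz1, hz2⟩
    have hm : (a+t : ℕ) ∈ T a t := memT.mpr (Or.inr ⟨le_refl _, by omega⟩)
    have hm1 : (a+t+1 : ℕ) ∈ T a t := memT.mpr (Or.inr ⟨by omega, by omega⟩)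
    have h1 := hz2 _ hm (by omega)
    have h2 := hz2 _ hm1 (by omega)
    have hz0 : 0 ≤ z := by
      by_contra hneg
      push_neg at hneg
      simp only [ZS, Set.mem_image] at h1
      obtain ⟨n, hn, hne⟩ := h1
      rw [memT] at hn
      have hzm : z = -(a+t : ℤ) := by omega
      simp only [ZS, Set.mem_image] at h2
      obtain ⟨n2, hn2, hne2⟩ := h2
      rw [memT] at hn2
      omega
    obtain ⟨g, rfl⟩ : ∃ g : ℕ, z = (g : ℤ) := ⟨z.toNat, (Int.toNat_of_nonneg hz0).symm⟩
    have hgT : g ∉ T a t := fun h => hz1 (mem_ZS.mpr h)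
    rw [memT] at hgT
    push_neg at hgT
    by_cases hgX : g = 2*a+t
    · right; simp [hgX]
    · left
      have hglt : g < a + t := by omega
      have hga : a < g := by
        by_contra hle
        push_neg at hle
        have hg0 : g ≠ 0 := hgT.1
        have hsT : (2*a+t-g : ℕ) ∈ T a t := memT.mpr (Or.inr ⟨by omega, by omega⟩)
        have h3 := hz2 _ hsT (by omega)
        simp only [ZS, Set.mem_image] at h3
        obtain ⟨n, hn, hne⟩ := h3
        rw [memT] at hn
        omega
      exact ⟨g, Set.mem_Ioo.mpr ⟨hga, hglt⟩, rfl⟩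
  · rintro (⟨g, hg, rfl⟩ | hz)
    · rw [Set.mem_Ioo] at hg
      refine ⟨fun h => ?_, fun s hs hs0 => ?_⟩
      · rw [mem_ZS, memT] at h; omega
      · rw [memT] at hs
        have : ((g + s : ℕ) : ℤ) = (g : ℤ) + (s : ℤ) := by push_cast; ring
        rw [← this, mem_ZS, memT]
        omega
    · rw [Set.mem_singleton_iff] at hz
      subst hz
      refine ⟨fun h => ?_, fun s hs hs0 => ?_⟩
      · rw [mem_ZS, memT] at h; omega
      · rw [memT] at hs
        have : ((2*a+t + s : ℕ) : ℤ) = ((2*a+t : ℕ) : ℤ) + (s : ℤ) := by push_cast; ring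
        rw [← this, mem_ZS, memT]
        omega

lemma typT (a t : ℕ) (ha : 2 ≤ a) (ht : 2 ≤ t) : typ (T a t) = t := by
  rw [typ, PFT a t ha ht,
    Set.ncard_union_eq ?dis (((Set.finite_Ioo _ _).image _)) (Set.finite_singleton _),
    Set.ncard_singleton, Set.ncard_image_of_injective _ (fun x y h => by exact_mod_cast h)]
  · have h : (Set.Ioo a (a+t)).ncard = t - 1 := by
      rw [← Finset.coe_Ioo, Set.ncard_coe_finset, Nat.card_Ioo]; omega
    omega
  case dis =>
    rw [Set.disjoint_singleton_right]
    rintro ⟨g, hg, hge⟩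
    rw [Set.mem_Ioo] at hg
    omega

lemma rPFT (a t : ℕ) (ha : 2 ≤ a) (ht : 2 ≤ t) : rPF (T a t) = PF (T a t) := by
  rw [PFT a t ha ht, rPF, frobT a t ha ht, multT a t ha ht]
  ext z
  simp only [Set.mem_setOf_eq, Set.mem_union, Set.mem_image, Set.mem_Ioo,
    Set.mem_singleton_iff]
  constructor
  · rintro ⟨h1, h2, h3⟩
    have hz0 : 0 ≤ z := by push_cast at h2 h3 ⊢; omega
    obtain ⟨g, rfl⟩ : ∃ g : ℕ, z = (g : ℤ) := ⟨z.toNat, (Int.toNat_of_nonneg hz0).symm⟩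
    have hgT : g ∉ T a t := fun h => h1 (mem_ZS.mpr h)
    rw [memT] at hgT
    push_neg at hgT
    push_cast at h2 h3
    by_cases hgX : g = 2*a+t
    · right; exact_mod_cast congrArg (fun n : ℕ => (n : ℤ)) hgX
    · left; exact ⟨g, Set.mem_Ioo.mpr ⟨by omega, by omega⟩, rfl⟩
  · rintro (⟨g, hg, rfl⟩ | hz)
    · refine ⟨fun h => ?_, by push_cast; omega, by push_cast; omega⟩
      rw [mem_ZS, memT] at h; omega
    · subst hz
      refine ⟨fun h => ?_, by push_cast; omega, by push_cast; omega⟩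
      rw [mem_ZS, memT] at h; omega

lemma msgT (a t : ℕ) (ha : 2 ≤ a) (ht : 2 ≤ t) :
    msg (T a t) = Set.Ico (a+t) (2*(a+t)) \ {2*a+t} := by
  ext x
  simp only [msg, Set.mem_diff, Set.mem_setOf_eq, Set.mem_singleton_iff, Set.mem_Ico]
  constructor
  · rintro ⟨⟨hx, hx0⟩, hsum⟩
    rw [memT] at hx
    refine ⟨⟨by omega, ?_⟩, by omega⟩
    by_contra hge
    push_neg at hge
    by_cases hc : x - (a+t) = 2*a+t
    · exact hsum ⟨a+t+1, ⟨memT.mpr (Or.inr ⟨by omega, by omega⟩), by omega⟩,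
        2*a+t-1, ⟨memT.mpr (Or.inr ⟨by omega, by omega⟩), by omega⟩, by omega⟩
    · exact hsum ⟨a+t, ⟨memT.mpr (Or.inr ⟨le_refl _, by omega⟩), by omega⟩,
        x-(a+t), ⟨memT.mpr (Or.inr ⟨by omega, hc⟩), by omega⟩, by omega⟩
  · rintro ⟨⟨h1, h2⟩, h3⟩
    refine ⟨⟨memT.mpr (Or.inr ⟨h1, h3⟩), by omega⟩, ?_⟩
    rintro ⟨p, ⟨hp, hp0⟩, q, ⟨hq, hq0⟩, rfl⟩
    rw [memT] at hp hq
    omega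

lemma embdimT (a t : ℕ) (ha : 2 ≤ a) (ht : 2 ≤ t) : embdim (T a t) = a + t - 1 := by
  rw [embdim, msgT a t ha ht,
    Set.ncard_diff_singleton_of_mem (by rw [Set.mem_Ico]; omega)]
  rw [← Finset.coe_Ico, Set.ncard_coe_finset, Nat.card_Ico]
  omega

end Aux

theorem stmt13 (t e : ℕ) (ht : 2 ≤ t) (hte : t ≤ e - 1) :
    ∃ S : Set ℕ, IsNumericalSemigroup S ∧
      2 * genus S = frob S + typ S ∧ redtyp S = typ S ∧
      typ S = t ∧ embdim S = e := by
  set a := e + 1 - t with ha_def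
  have ha : 2 ≤ a := by omega
  have hat : a + t = e + 1 := by omega
  refine ⟨Aux.T a t, Aux.nsgT a t ha ht, ?_, ?_, Aux.typT a t ha ht, ?_⟩
  · rw [Aux.genusT a t ha ht, Aux.frobT a t ha ht, Aux.typT a t ha ht]; omega
  · rw [redtyp, Aux.rPFT a t ha ht]; rfl
  · rw [Aux.embdimT a t ha ht]; omega
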